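/- Let V be a real vector space with an increasing sequence of seminorms (μ_n)_{n∈ℕ} generating its topology, and let W be a complete Hausdorff real topological vector space whose topology is generated by an increasing, point-separating sequence of seminorms (ν_n)_{n∈ℕ}. Fix r, b ∈ ℕ and let T_{r,b}L(V,W) be the space of continuous linear maps f : V → W such that ‖f‖_n := sup{ν_n(f(v)) : v ∈ V, μ_{n+r}(v) ≤ 1} is finite for every n ≥ b. Then T_{r,b}L(V,W), equipped with the translation-invariant metric D(f,g) := Σ_{n≥b} 2^{-n}·min(1, ‖f−g‖_n), is a complete metric space. -/

import Mathlib

/-- The set of values `ν n (f v)` for `v` in the unit ball of the seminorm `μ (n+r)`;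
its supremum is the operator "norm" `‖f‖_n` of a tame linear map. -/
def tameNormSet {V W : Type*} [AddCommGroup V] [Module ℝ V] [TopologicalSpace V]
    [AddCommGroup W] [Module ℝ W] [TopologicalSpace W]
    (μ : SeminormFamily ℝ V ℕ) (ν : SeminormFamily ℝ W ℕ) (r : ℕ)
    (f : V →L[ℝ] W) (n : ℕ) : Set ℝ :=
  (fun v => ν n (f v)) '' {v : V | μ (n + r) v ≤ 1}

/-- `‖f‖_n = sup {ν n (f v) | μ (n+r) v ≤ 1}`. -/
noncomputable def tameOpNorm {V W : Type*} [AddCommGroup V] [Module ℝ V]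
    [TopologicalSpace V] [AddCommGroup W] [Module ℝ W] [TopologicalSpace W]
    (μ : SeminormFamily ℝ V ℕ) (ν : SeminormFamily ℝ W ℕ) (r : ℕ)
    (f : V →L[ℝ] W) (n : ℕ) : ℝ :=
  sSup (tameNormSet μ ν r f n)

/-- `T_{r,b}L(V,W)`: the continuous linear maps `f : V → W` with `‖f‖_n < ∞`
(i.e. the relevant set of values is bounded above) for all `n ≥ b`. -/
def TameLinearMaps {V W : Type*} [AddCommGroup V] [Module ℝ V] [TopologicalSpace V]
    [AddCommGroup W] [Module ℝ W] [TopologicalSpace W]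
    (μ : SeminormFamily ℝ V ℕ) (ν : SeminormFamily ℝ W ℕ) (r b : ℕ) : Type _ :=
  {f : V →L[ℝ] W // ∀ n, b ≤ n → BddAbove (tameNormSet μ ν r f n)}

/-- The translation-invariant metric `D(f,g) = Σ_{n ≥ b} 2⁻ⁿ min(1, ‖f - g‖_n)`
on `T_{r,b}L(V,W)`. -/
noncomputable def tameMetric {V W : Type*} [AddCommGroup V] [Module ℝ V]
    [TopologicalSpace V] [AddCommGroup W] [Module ℝ W] [TopologicalSpace W]
    [IsTopologicalAddGroup W]
    (μ : SeminormFamily ℝ V ℕ) (ν : SeminormFamily ℝ W ℕ) (r b : ℕ)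
    (f g : TameLinearMaps μ ν r b) : ℝ :=
  ∑' n : ℕ, if b ≤ n then 2⁻¹ ^ n * min 1 (tameOpNorm μ ν r (f.1 - g.1) n) else 0


open Filter Topology Uniformity

section Aux

variable {V W : Type*} [AddCommGroup V] [Module ℝ V] [TopologicalSpace V]
    [AddCommGroup W] [Module ℝ W] [TopologicalSpace W] [IsTopologicalAddGroup W]
    (μ : SeminormFamily ℝ V ℕ) (ν : SeminormFamily ℝ W ℕ) (r : ℕ)

lemma seminormFamily_chain_mono {X : Type*} [AddCommGroup X] [Module ℝ X]
    (p : SeminormFamily ℝ X ℕ) (hp : ∀ n x, p n x ≤ p (n + 1) x)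
    {i j : ℕ} (hij : i ≤ j) (x : X) : p i x ≤ p j x := by
  induction j, hij using Nat.le_induction with
  | base => exact le_rfl
  | succ k hk ih => exact ih.trans (hp k x)

lemma zero_mem_tameNormSet (f : V →L[ℝ] W) (n : ℕ) : (0 : ℝ) ∈ tameNormSet μ ν r f n :=
  ⟨0, by simp [Set.mem_setOf_eq], by simp⟩

lemma tameOpNorm_nonneg (f : V →L[ℝ] W) (n : ℕ) : 0 ≤ tameOpNorm μ ν r f n :=
  Real.sSup_nonneg (by rintro x ⟨v, hv, rfl⟩; exact apply_nonneg _ _)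

lemma le_tameOpNorm {f : V →L[ℝ] W} {n : ℕ} (h : BddAbove (tameNormSet μ ν r f n))
    {v : V} (hv : μ (n + r) v ≤ 1) : ν n (f v) ≤ tameOpNorm μ ν r f n :=
  le_csSup h ⟨v, hv, rfl⟩

lemma tameOpNorm_le {f : V →L[ℝ] W} {n : ℕ} {C : ℝ} (hC : 0 ≤ C)
    (h : ∀ v, μ (n + r) v ≤ 1 → ν n (f v) ≤ C) : tameOpNorm μ ν r f n ≤ C :=
  Real.sSup_le (by rintro x ⟨v, hv, rfl⟩; exact h v hv) hC

/-- Scaling: a bound on the unit ball gives a linear bound. -/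
lemma nu_mul_bound (f : V →ₗ[ℝ] W) (n m : ℕ) {C : ℝ} (hC : 0 ≤ C)
    (h : ∀ v, μ m v ≤ 1 → ν n (f v) ≤ C) (v : V) : ν n (f v) ≤ C * μ m v := by
  set c := μ m v with hc
  have hc0 : 0 ≤ c := apply_nonneg _ _
  have key : ∀ d : ℝ, 0 < d → ν n (f v) ≤ C * (c + d) := by
    intro d hd
    have hcd : 0 < c + d := by linarith
    have hball : μ m ((c + d)⁻¹ • v) ≤ 1 := by
      rw [map_smul_eq_mul, Real.norm_eq_abs, abs_of_pos (by positivity)]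
      rw [inv_mul_le_iff₀ hcd]
      simpa using by linarith
    have := h _ hball
    rw [map_smul, map_smul_eq_mul, Real.norm_eq_abs, abs_of_pos (by positivity),
      inv_mul_le_iff₀ hcd] at this
    linarith [this, mul_comm C (c + d)]
  refine le_of_forall_pos_le_add fun ε hε => ?_
  have := key (ε / (C + 1)) (by positivity)
  have h2 : C * (ε / (C + 1)) ≤ ε := by
    rw [mul_div_assoc']
    rw [div_le_iff₀ (by linarith)]
    nlinarith
  nlinarith [this]

lemma bddAbove_tameNormSet_sub {f g : V →L[ℝ] W} {n : ℕ}
    (hf : BddAbove (tameNormSet μ ν r f n)) (hg : BddAbove (tameNormSet μ ν r g n)) :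
    BddAbove (tameNormSet μ ν r (f - g) n) := by
  refine ⟨tameOpNorm μ ν r f n + tameOpNorm μ ν r g n, ?_⟩
  rintro x ⟨v, hv, rfl⟩
  have : ν n ((f - g) v) ≤ ν n (f v) + ν n (g v) := by
    simpa [ContinuousLinearMap.sub_apply] using map_sub_le_add (ν n) (f v) (g v)
  exact this.trans (add_le_add (le_tameOpNorm μ ν r hf hv) (le_tameOpNorm μ ν r hg hv))

lemma tameOpNorm_sub_comm (f g : V →L[ℝ] W) (n : ℕ) :
    tameOpNorm μ ν r (f - g) n = tameOpNorm μ ν r (g - f) n := by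
  unfold tameOpNorm tameNormSet
  congr 1
  ext x
  constructor <;> rintro ⟨v, hv, rfl⟩ <;> refine ⟨v, hv, ?_⟩ <;>
    simp [ContinuousLinearMap.sub_apply, map_sub_rev]

lemma min1_add {a c : ℝ} (ha : 0 ≤ a) (hc : 0 ≤ c) : min 1 (a + c) ≤ min 1 a + min 1 c := by
  rcases le_total 1 a with h | h
  · have h1 : min 1 a = 1 := min_eq_left h
    have := min_le_left 1 (a + c)
    have := le_min zero_le_one hc
    linarith
  · rcases le_total 1 c with h' | h'
    · have h1 : min 1 c = 1 := min_eq_left h'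
      have := min_le_left 1 (a + c)
      have := le_min zero_le_one ha
      linarith
    · have h1 : min 1 a = a := min_eq_right h
      have h2 : min 1 c = c := min_eq_right h'
      have := min_le_right 1 (a + c)
      linarith

end Aux

section Main

variable {V W : Type*} [AddCommGroup V] [Module ℝ V] [TopologicalSpace V]
    [AddCommGroup W] [Module ℝ W] [UniformSpace W] [IsUniformAddGroup W]
    (μ : SeminormFamily ℝ V ℕ) (ν : SeminormFamily ℝ W ℕ) (r b : ℕ)

/-- The `n`-th term of the tame metric. -/
noncomputable def tameTerm (f g : TameLinearMaps μ ν r b) (n : ℕ) : ℝ :=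
  if b ≤ n then 2⁻¹ ^ n * min 1 (tameOpNorm μ ν r (f.1 - g.1) n) else 0

lemma tameTerm_nonneg (f g : TameLinearMaps μ ν r b) (n : ℕ) : 0 ≤ tameTerm μ ν r b f g n := by
  unfold tameTerm
  split
  · exact mul_nonneg (by positivity) (le_min zero_le_one (tameOpNorm_nonneg μ ν r _ n))
  · exact le_rfl

lemma tameTerm_le_geom (f g : TameLinearMaps μ ν r b) (n : ℕ) :
    tameTerm μ ν r b f g n ≤ 2⁻¹ ^ n := by
  unfold tameTerm
  split
  · calc 2⁻¹ ^ n * min 1 (tameOpNorm μ ν r (f.1 - g.1) n) ≤ 2⁻¹ ^ n * 1 :=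
        mul_le_mul_of_nonneg_left (min_le_left _ _) (by positivity)
    _ = 2⁻¹ ^ n := mul_one _
  · positivity

lemma tameTerm_summable (f g : TameLinearMaps μ ν r b) :
    Summable (tameTerm μ ν r b f g) :=
  Summable.of_nonneg_of_le (tameTerm_nonneg μ ν r b f g) (tameTerm_le_geom μ ν r b f g)
    (summable_geometric_of_lt_one (by norm_num) (by norm_num))

lemma tameMetric_eq_tsum (f g : TameLinearMaps μ ν r b) :
    tameMetric μ ν r b f g = ∑' n, tameTerm μ ν r b f g n := rfl

lemma tameTerm_le_metric (f g : TameLinearMaps μ ν r b) (n : ℕ) :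
    tameTerm μ ν r b f g n ≤ tameMetric μ ν r b f g :=
  Summable.le_tsum (tameTerm_summable μ ν r b f g) n (fun j _ => tameTerm_nonneg μ ν r b f g j)

end Main
/-- Let `V` carry an increasing sequence of seminorms `(μ n)` generating its topology,
and let `W` be a complete Hausdorff real tvs whose topology is generated by an
increasing, point-separating sequence of seminorms `(ν n)`.  Then for any `r b : ℕ`,
the space `T_{r,b}L(V,W)` with the metric `D(f,g) = Σ_{n≥b} 2⁻ⁿ min(1,‖f-g‖_n)` is a
complete metric space. -/
theorem stmt14 (V W : Type*)
    [AddCommGroup V] [Module ℝ V] [TopologicalSpace V]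
    [AddCommGroup W] [Module ℝ W] [UniformSpace W] [IsUniformAddGroup W]
    [CompleteSpace W]
    (μ : SeminormFamily ℝ V ℕ) (ν : SeminormFamily ℝ W ℕ)
    (hμtop : WithSeminorms μ) (hνtop : WithSeminorms ν)
    (hμmono : ∀ (n : ℕ) (v : V), μ n v ≤ μ (n + 1) v)
    (hνmono : ∀ (n : ℕ) (w : W), ν n w ≤ ν (n + 1) w)
    (hνsep : ∀ w : W, (∀ n, ν n w = 0) → w = 0)
    (r b : ℕ) :
    (∀ f g : TameLinearMaps μ ν r b, tameMetric μ ν r b f g = 0 ↔ f = g) ∧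
    (∀ f g : TameLinearMaps μ ν r b, tameMetric μ ν r b f g = tameMetric μ ν r b g f) ∧
    (∀ f g h : TameLinearMaps μ ν r b,
      tameMetric μ ν r b f h ≤ tameMetric μ ν r b f g + tameMetric μ ν r b g h) ∧
    (∀ u : ℕ → TameLinearMaps μ ν r b,
      (∀ ε : ℝ, 0 < ε → ∃ N, ∀ m, N ≤ m → ∀ n, N ≤ n →
        tameMetric μ ν r b (u m) (u n) < ε) →
      ∃ L : TameLinearMaps μ ν r b, ∀ ε : ℝ, 0 < ε → ∃ N, ∀ n, N ≤ n →
        tameMetric μ ν r b (u n) L < ε) := by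
  have hνchain : ∀ {i j : ℕ}, i ≤ j → ∀ w : W, ν i w ≤ ν j w :=
    fun {i j} h w => seminormFamily_chain_mono ν hνmono h w
  refine ⟨?_, ?_, ?_, ?_⟩
  · -- D = 0 iff f = g
    intro f g
    constructor
    · intro hD
      have hterm : ∀ n, b ≤ n → tameOpNorm μ ν r (f.1 - g.1) n = 0 := by
        intro n hn
        have h1 : tameTerm μ ν r b f g n ≤ 0 := hD ▸ tameTerm_le_metric μ ν r b f g n
        have h2 := tameTerm_nonneg μ ν r b f g n
        have h0 : tameTerm μ ν r b f g n = 0 := le_antisymm h1 h2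
        unfold tameTerm at h0
        rw [if_pos hn] at h0
        have hpow : (0:ℝ) < 2⁻¹ ^ n := by positivity
        have hmin : min 1 (tameOpNorm μ ν r (f.1 - g.1) n) = 0 := by
          rcases mul_eq_zero.mp h0 with h | h
          · exact absurd h (ne_of_gt hpow)
          · exact h
        have hnn := tameOpNorm_nonneg μ ν r (f.1 - g.1) n
        rcases min_eq_iff.mp hmin with ⟨h1', _⟩ | ⟨h1', _⟩
        · norm_num at h1'
        · exact h1'
      have hzero : ∀ v : V, (f.1 - g.1) v = 0 := by
        intro v
        apply hνsep
        intro n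
        have hb : n ≤ max n b := le_max_left _ _
        have hn' : b ≤ max n b := le_max_right _ _
        have hball : ∀ w, μ (max n b + r) w ≤ 1 → ν (max n b) ((f.1 - g.1) w) ≤ 0 := by
          intro w hw
          rw [← hterm (max n b) hn']
          exact le_tameOpNorm μ ν r (bddAbove_tameNormSet_sub μ ν r (f.2 _ hn') (g.2 _ hn')) hw
        have := nu_mul_bound μ ν (f.1 - g.1 : V →L[ℝ] W).toLinearMap (max n b)
          (max n b + r) le_rfl hball v
        have h2 : ν (max n b) ((f.1 - g.1) v) ≤ 0 := by simpa using this
        have h3 : ν n ((f.1 - g.1) v) ≤ 0 := le_trans (hνchain hb _) h2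
        exact le_antisymm h3 (apply_nonneg _ _)
      apply Subtype.ext
      apply ContinuousLinearMap.ext
      intro v
      have := hzero v
      rw [ContinuousLinearMap.sub_apply, sub_eq_zero] at this
      exact this
    · rintro rfl
      rw [tameMetric_eq_tsum]
      convert tsum_zero with n
      unfold tameTerm
      split
      · have : tameOpNorm μ ν r (f.1 - f.1) n = 0 := by
          apply le_antisymm _ (tameOpNorm_nonneg μ ν r _ n)
          apply tameOpNorm_le μ ν r le_rfl
          intro v _
          simp
        rw [this]
        simp
      · rfl
  · -- symmetry
    intro f g
    rw [tameMetric_eq_tsum, tameMetric_eq_tsum]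
    congr 1
    funext n
    unfold tameTerm
    rw [tameOpNorm_sub_comm]
  · -- triangle
    intro f g h
    rw [tameMetric_eq_tsum, tameMetric_eq_tsum, tameMetric_eq_tsum, ← Summable.tsum_add
      (tameTerm_summable μ ν r b f g) (tameTerm_summable μ ν r b g h)]
    refine Summable.tsum_le_tsum ?_ (tameTerm_summable μ ν r b f h)
      ((tameTerm_summable μ ν r b f g).add (tameTerm_summable μ ν r b g h))
    intro n
    unfold tameTerm
    split
    case isTrue hn =>
      have htri : tameOpNorm μ ν r (f.1 - h.1) n ≤
          tameOpNorm μ ν r (f.1 - g.1) n + tameOpNorm μ ν r (g.1 - h.1) n := by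
        refine tameOpNorm_le μ ν r
          (add_nonneg (tameOpNorm_nonneg μ ν r _ n) (tameOpNorm_nonneg μ ν r _ n)) ?_
        intro v hv
        have e : (f.1 - h.1) v = (f.1 - g.1) v + (g.1 - h.1) v := by
          simp only [ContinuousLinearMap.sub_apply]; abel
        rw [e]
        exact (map_add_le_add (ν n) _ _).trans (add_le_add
          (le_tameOpNorm μ ν r (bddAbove_tameNormSet_sub μ ν r (f.2 _ hn) (g.2 _ hn)) hv)
          (le_tameOpNorm μ ν r (bddAbove_tameNormSet_sub μ ν r (g.2 _ hn) (h.2 _ hn)) hv))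
      have hm : min 1 (tameOpNorm μ ν r (f.1 - h.1) n) ≤
          min 1 (tameOpNorm μ ν r (f.1 - g.1) n) + min 1 (tameOpNorm μ ν r (g.1 - h.1) n) := by
        refine le_trans ?_ (min1_add (tameOpNorm_nonneg μ ν r _ n) (tameOpNorm_nonneg μ ν r _ n))
        exact min_le_min le_rfl htri
      calc 2⁻¹ ^ n * min 1 (tameOpNorm μ ν r (f.1 - h.1) n)
          ≤ 2⁻¹ ^ n * (min 1 (tameOpNorm μ ν r (f.1 - g.1) n)
            + min 1 (tameOpNorm μ ν r (g.1 - h.1) n)) :=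
            mul_le_mul_of_nonneg_left hm (by positivity)
        _ = _ := by ring
    case isFalse => simp
  · -- completeness
    intro u hu
    have key : ∀ ε : ℝ, 0 < ε → ∃ N, ∀ m, N ≤ m → ∀ k, N ≤ k → ∀ n, b ≤ n →
        2⁻¹ ^ n * min 1 (tameOpNorm μ ν r ((u m).1 - (u k).1) n) < ε := by
      intro ε hε
      obtain ⟨N, hN⟩ := hu ε hε
      refine ⟨N, fun m hm k hk n hn => ?_⟩
      have h1 := tameTerm_le_metric μ ν r b (u m) (u k) n
      have h2 := hN m hm k hk
      unfold tameTerm at h1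
      rw [if_pos hn] at h1
      exact lt_of_le_of_lt h1 h2
    have opB : ∀ n, b ≤ n → ∀ δ : ℝ, 0 < δ → δ ≤ 1 → ∃ N, ∀ m, N ≤ m → ∀ k, N ≤ k →
        tameOpNorm μ ν r ((u m).1 - (u k).1) n < δ := by
      intro n hn δ hδ hδ1
      obtain ⟨N, hN⟩ := key (2⁻¹ ^ n * δ) (by positivity)
      refine ⟨N, fun m hm k hk => ?_⟩
      have h := hN m hm k hk n hn
      have hpow : (0:ℝ) < 2⁻¹ ^ n := by positivity
      have hmin : min 1 (tameOpNorm μ ν r ((u m).1 - (u k).1) n) < δ :=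
        (mul_lt_mul_iff_right₀ hpow).mp h
      rcases le_total 1 (tameOpNorm μ ν r ((u m).1 - (u k).1) n) with h' | h'
      · rw [min_eq_left h'] at hmin; linarith
      · rwa [min_eq_right h'] at hmin
    have unifB : ∀ n, b ≤ n → ∃ C : ℝ, 0 ≤ C ∧ ∀ k, ∀ v, μ (n + r) v ≤ 1 →
        ν n ((u k).1 v) ≤ C := by
      intro n hn
      obtain ⟨N, hN⟩ := opB n hn 1 one_pos le_rfl
      set C0 : ℝ := (Finset.range (N + 1)).sup' Finset.nonempty_range_add_one
        (fun k => tameOpNorm μ ν r (u k).1 n) with hC0def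
      have hsup : ∀ j, j ≤ N → tameOpNorm μ ν r (u j).1 n ≤ C0 := by
        intro j hj
        rw [hC0def]
        exact Finset.le_sup' (fun k => tameOpNorm μ ν r (u k).1 n)
          (Finset.mem_range_succ_iff.mpr hj)
      have hC0 : 0 ≤ C0 := le_trans (tameOpNorm_nonneg μ ν r (u N).1 n) (hsup N le_rfl)
      refine ⟨C0 + 1, by linarith, fun k v hv => ?_⟩
      rcases le_or_gt k N with hk | hk
      · have h1 : ν n ((u k).1 v) ≤ tameOpNorm μ ν r (u k).1 n :=
          le_tameOpNorm μ ν r ((u k).2 n hn) hv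
        have h2 : tameOpNorm μ ν r (u k).1 n ≤ C0 := hsup k hk
        linarith
      · have hdiff : ν n (((u k).1 - (u N).1) v) ≤ tameOpNorm μ ν r ((u k).1 - (u N).1) n :=
          le_tameOpNorm μ ν r (bddAbove_tameNormSet_sub μ ν r ((u k).2 n hn) ((u N).2 n hn)) hv
        have hop := hN k hk.le N le_rfl
        have hNb : ν n ((u N).1 v) ≤ C0 :=
          le_trans (le_tameOpNorm μ ν r ((u N).2 n hn) hv) (hsup N le_rfl)
        have e : (u k).1 v = (((u k).1 - (u N).1) v) + (u N).1 v := by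
          simp only [ContinuousLinearMap.sub_apply]; abel
        calc ν n ((u k).1 v) ≤ ν n (((u k).1 - (u N).1) v) + ν n ((u N).1 v) := by
              rw [e]; exact map_add_le_add _ _ _
          _ ≤ C0 + 1 := by linarith
    haveI : T1Space W := hνtop.T1_of_separating (by
      intro x hx
      by_contra hcon
      push_neg at hcon
      exact hx (hνsep x hcon))
    haveI : T2Space W := inferInstance
    have huni : (𝓤 W).HasBasis (fun sr : Finset ℕ × ℝ => 0 < sr.2)
        (fun sr => (fun p : W × W => p.2 - p.1) ⁻¹' ((sr.1.sup ν).ball 0 sr.2)) := by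
      rw [uniformity_eq_comap_nhds_zero W]
      exact hνtop.hasBasis_zero_ball.comap _
    have hcau : ∀ v : V, CauchySeq (fun k => (u k).1 v) := by
      intro v
      rw [huni.cauchySeq_iff]
      rintro ⟨s, ε⟩ hε
      simp only at hε
      set n0 : ℕ := max (s.sup id) b with hn0def
      have hn0b : b ≤ n0 := le_max_right _ _
      set c : ℝ := μ (n0 + r) v with hcdef
      have hc0 : 0 ≤ c := apply_nonneg _ _
      set δ : ℝ := min (ε / (c + 1)) 1 with hδdef
      have hδpos : 0 < δ := lt_min (by positivity) one_pos
      obtain ⟨N, hN⟩ := opB n0 hn0b δ hδpos (min_le_right _ _)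
      refine ⟨N, fun m hm k hk => ?_⟩
      simp only [Set.mem_preimage, Seminorm.mem_ball_zero]
      have hop := hN k hk m hm
      have hball : ∀ w, μ (n0 + r) w ≤ 1 →
          ν n0 ((((u k).1 - (u m).1) : V →L[ℝ] W).toLinearMap w) ≤ δ := by
        intro w hw
        exact le_trans (le_tameOpNorm μ ν r
          (bddAbove_tameNormSet_sub μ ν r ((u k).2 n0 hn0b) ((u m).2 n0 hn0b)) hw) hop.le
      have hbv := nu_mul_bound μ ν (((u k).1 - (u m).1) : V →L[ℝ] W).toLinearMap n0 (n0 + r)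
        hδpos.le hball v
      have hle : ν n0 ((u k).1 v - (u m).1 v) ≤ δ * c := by
        simpa [ContinuousLinearMap.sub_apply] using hbv
      have hfin : ν n0 ((u k).1 v - (u m).1 v) < ε := by
        have h1 : δ ≤ ε / (c + 1) := min_le_left _ _
        have h2 : δ * c ≤ ε / (c + 1) * c := mul_le_mul_of_nonneg_right h1 hc0
        have h3 : ε / (c + 1) * (c + 1) = ε := div_mul_cancel₀ _ (by linarith)
        nlinarith [div_pos hε (show (0:ℝ) < c + 1 by linarith)]
      refine Seminorm.finset_sup_apply_lt hε fun i hi => ?_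
      have hi0 : i ≤ n0 := le_trans (Finset.le_sup (f := id) hi) (le_max_left _ _)
      exact lt_of_le_of_lt (hνchain hi0 _) hfin
    have hex : ∀ v : V, ∃ w : W, Tendsto (fun k => (u k).1 v) atTop (𝓝 w) :=
      fun v => cauchySeq_tendsto_of_complete (hcau v)
    choose g hg using hex
    have gBall : ∀ n, b ≤ n → ∃ C : ℝ, 0 ≤ C ∧ ∀ v, μ (n + r) v ≤ 1 → ν n (g v) ≤ C := by
      intro n hn
      obtain ⟨C, hC0, hC⟩ := unifB n hn
      refine ⟨C, hC0, fun v hv => ?_⟩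
      have ht : Tendsto (fun k => ν n ((u k).1 v)) atTop (𝓝 (ν n (g v))) :=
        ((hνtop.continuous_seminorm n).tendsto (g v)).comp (hg v)
      exact le_of_tendsto ht (Filter.Eventually.of_forall fun k => hC k v hv)
    haveI : ContinuousSMul ℝ W := hνtop.continuousSMul
    have hadd : ∀ a c : V, g (a + c) = g a + g c := by
      intro a c
      refine tendsto_nhds_unique (hg (a + c)) ?_
      have h := (hg a).add (hg c)
      simpa [map_add] using h
    have hsmul : ∀ (t : ℝ) (a : V), g (t • a) = t • g a := by
      intro t a
      refine tendsto_nhds_unique (hg (t • a)) ?_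
      have h := (hg a).const_smul t
      simpa [map_smul] using h
    set L0 : V →ₗ[ℝ] W :=
      { toFun := g, map_add' := hadd, map_smul' := hsmul } with hL0def
    have hcont : Continuous L0 := by
      apply Seminorm.continuous_from_bounded hμtop hνtop
      intro n
      obtain ⟨C, hC0, hC⟩ := gBall (max n b) (le_max_right _ _)
      refine ⟨{max n b + r}, C.toNNReal, ?_⟩
      rw [Finset.sup_singleton]
      refine Seminorm.le_def.mpr fun v => ?_
      have h1 : ν n (L0 v) ≤ ν (max n b) (L0 v) := hνchain (le_max_left _ _) _
      have h2 : ν (max n b) (L0 v) ≤ C * μ (max n b + r) v :=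
        nu_mul_bound μ ν L0 (max n b) (max n b + r) hC0 hC v
      have h3 : ((C.toNNReal • μ (max n b + r)) : Seminorm ℝ V) v = C * μ (max n b + r) v := by
        simp [NNReal.smul_def, Real.coe_toNNReal C hC0]
      rw [Seminorm.comp_apply, h3]
      exact h1.trans h2
    set Lc : V →L[ℝ] W := ⟨L0, hcont⟩ with hLcdef
    have hmem : ∀ n, b ≤ n → BddAbove (tameNormSet μ ν r Lc n) := by
      intro n hn
      obtain ⟨C, hC0, hC⟩ := gBall n hn
      refine ⟨C, ?_⟩
      rintro x ⟨v, hv, rfl⟩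
      exact hC v hv
    refine ⟨⟨Lc, hmem⟩, ?_⟩
    intro ε hε
    obtain ⟨M, hM⟩ := exists_pow_lt_of_lt_one (show (0:ℝ) < ε / 4 by linarith)
      (show (2⁻¹:ℝ) < 1 by norm_num)
    set ε' : ℝ := ε / (4 * (M + 1)) with hε'def
    have hε' : 0 < ε' := by positivity
    obtain ⟨N, hN⟩ := key ε' hε'
    refine ⟨N, fun m hm => ?_⟩
    set L : TameLinearMaps μ ν r b := ⟨Lc, hmem⟩ with hLdef
    have hminb : ∀ n, b ≤ n →
        min 1 (tameOpNorm μ ν r ((u m).1 - Lc) n) ≤ 2 ^ n * ε' := by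
      intro n hn
      by_cases hcase : (1:ℝ) ≤ 2 ^ n * ε'
      · exact le_trans (min_le_left _ _) hcase
      · push_neg at hcase
        have hdk : ∀ k, N ≤ k → tameOpNorm μ ν r ((u m).1 - (u k).1) n ≤ 2 ^ n * ε' := by
          intro k hk
          have h := hN m hm k hk n hn
          have hpow : (0:ℝ) < 2⁻¹ ^ n := by positivity
          have h2 : min 1 (tameOpNorm μ ν r ((u m).1 - (u k).1) n) < 2 ^ n * ε' := by
            calc min 1 (tameOpNorm μ ν r ((u m).1 - (u k).1) n)
                  = 2⁻¹ ^ n * min 1 (tameOpNorm μ ν r ((u m).1 - (u k).1) n) * 2 ^ n := by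
                    rw [mul_comm (2⁻¹ ^ n) _, mul_assoc]
                    rw [← mul_pow]
                    norm_num
                _ < ε' * 2 ^ n := by
                    apply mul_lt_mul_of_pos_right h (by positivity)
                _ = 2 ^ n * ε' := mul_comm _ _
          rcases le_total 1 (tameOpNorm μ ν r ((u m).1 - (u k).1) n) with h' | h'
          · rw [min_eq_left h'] at h2; linarith
          · rw [min_eq_right h'] at h2; linarith
        have hop : tameOpNorm μ ν r ((u m).1 - Lc) n ≤ 2 ^ n * ε' := by
          apply tameOpNorm_le μ ν r (by positivity)
          intro v hv
          have ht : Tendsto (fun k => ν n ((u m).1 v - (u k).1 v)) atTop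
              (𝓝 (ν n ((u m).1 v - g v))) :=
            ((hνtop.continuous_seminorm n).tendsto _).comp (tendsto_const_nhds.sub (hg v))
          have hev : ∀ᶠ k in atTop, ν n ((u m).1 v - (u k).1 v) ≤ 2 ^ n * ε' := by
            filter_upwards [eventually_ge_atTop N] with k hk
            have := le_tameOpNorm μ ν r
              (bddAbove_tameNormSet_sub μ ν r ((u m).2 n hn) ((u k).2 n hn)) hv
            simp only [ContinuousLinearMap.sub_apply] at this
            exact this.trans (hdk k hk)
          have hlim : ν n ((u m).1 v - g v) ≤ 2 ^ n * ε' := le_of_tendsto ht hev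
          have : ((u m).1 - Lc) v = (u m).1 v - g v := by
            simp only [ContinuousLinearMap.sub_apply]; rfl
          rw [this]
          exact hlim
        exact le_trans (min_le_right _ _) hop
    have hterm : ∀ n, tameTerm μ ν r b (u m) L n ≤ if b ≤ n then ε' else 0 := by
      intro n
      unfold tameTerm
      split
      case isTrue hn =>
        calc 2⁻¹ ^ n * min 1 (tameOpNorm μ ν r ((u m).1 - L.1) n)
            ≤ 2⁻¹ ^ n * (2 ^ n * ε') :=
              mul_le_mul_of_nonneg_left (hminb n hn) (by positivity)
          _ = ε' := by
              rw [← mul_assoc, ← mul_pow]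
              norm_num
      case isFalse => exact le_rfl
    have hterm' : ∀ n, tameTerm μ ν r b (u m) L n ≤ ε' := by
      intro n
      refine (hterm n).trans ?_
      split <;> [exact le_rfl; exact hε'.le]
    have hsplit := Summable.sum_add_tsum_nat_add (f := tameTerm μ ν r b (u m) L) M
      (tameTerm_summable μ ν r b (u m) L)
    rw [tameMetric_eq_tsum, ← hsplit]
    have hhead : ∑ i ∈ Finset.range M, tameTerm μ ν r b (u m) L i ≤ M * ε' := by
      calc ∑ i ∈ Finset.range M, tameTerm μ ν r b (u m) L i
          ≤ ∑ i ∈ Finset.range M, ε' := Finset.sum_le_sum fun i _ => hterm' i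
        _ = M * ε' := by rw [Finset.sum_const, Finset.card_range, nsmul_eq_mul]
    have hgs : Summable (fun i : ℕ => (2⁻¹:ℝ) ^ (i + M)) := by
      simpa [pow_add] using
        (summable_geometric_of_lt_one (show (0:ℝ) ≤ 2⁻¹ by norm_num)
          (by norm_num)).mul_right ((2⁻¹:ℝ) ^ M)
    have htail : ∑' i, tameTerm μ ν r b (u m) L (i + M) ≤ 2 * 2⁻¹ ^ M := by
      have h1 : ∑' i, tameTerm μ ν r b (u m) L (i + M) ≤ ∑' i, (2⁻¹:ℝ) ^ (i + M) :=
        Summable.tsum_le_tsum (fun i => tameTerm_le_geom μ ν r b (u m) L (i + M))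
          ((summable_nat_add_iff M).mpr (tameTerm_summable μ ν r b (u m) L)) hgs
      have h2 : ∑' i, (2⁻¹:ℝ) ^ (i + M) = 2 * 2⁻¹ ^ M := by
        simp only [pow_add]
        rw [tsum_mul_right, tsum_geometric_of_lt_one (by norm_num) (by norm_num)]
        norm_num [mul_comm]
      rw [h2] at h1
      exact h1
    have hM4 : (M:ℝ) * ε' ≤ ε / 4 := by
      have hMnn : (0:ℝ) ≤ M := Nat.cast_nonneg M
      have : (M:ℝ) * (ε / (4 * (M + 1))) ≤ ε / 4 := by
        rw [← mul_div_assoc, div_le_div_iff₀ (by positivity) (by norm_num)]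
        nlinarith
      simpa [hε'def] using this
    have htail2 : 2 * (2⁻¹:ℝ) ^ M < ε / 2 := by linarith
    calc ∑ i ∈ Finset.range M, tameTerm μ ν r b (u m) L i
          + ∑' i, tameTerm μ ν r b (u m) L (i + M)
        ≤ M * ε' + 2 * 2⁻¹ ^ M := add_le_add hhead htail
      _ < ε / 4 + ε / 2 := add_lt_add_of_le_of_lt hM4 htail2
      _ < ε := by linarith
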